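/- Let Q = (0,1)² and let h : [0,1]² → ℝ be a Lipschitz function that satisfies ∂_t h + (1/2)(∂_x h)² = 0 almost everywhere in Q, and set L := ‖∂_x h‖_{L^∞(Q)} (so that x ↦ h(t,x) is L-Lipschitz and t ↦ h(t,x) is (L²/2)-Lipschitz). Let h̄ be the Hopf–Lax function h̄(t,x) := inf { h(s,y) + (x−y)²/(2(t−s)) : (s,y) ∈ ∂₀Q, s < t } for (t,x) ∈ Q. Then for every t ∈ (0,1), the function x ↦ h̄(t,x) is L-Lipschitz on (0,1); equivalently, |∂_x h̄| ≤ L almost everywhere in Q. -/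

import Mathlib

open MeasureTheory Set Filter Topology

noncomputable section

/-- The `t`-partial derivative (coordinates on `ℝ²` are `z = (t, x)`). -/
def pdt (φ : ℝ × ℝ → ℝ) (z : ℝ × ℝ) : ℝ := fderiv ℝ φ z (1, 0)

/-- The `x`-partial derivative. -/
def pdx (φ : ℝ × ℝ → ℝ) (z : ℝ × ℝ) : ℝ := fderiv ℝ φ z (0, 1)

/-- `φ ∈ C_c^∞(Ω)`: a smooth compactly supported test function with support in `Ω`. -/
def IsTestFun (Ω : Set (ℝ × ℝ)) (φ : ℝ × ℝ → ℝ) : Prop :=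
  ContDiff ℝ (⊤ : ℕ∞) φ ∧ HasCompactSupport φ ∧ tsupport φ ⊆ Ω

/-- `u` is a weak solution of Burgers' equation `∂ₜ u + ∂ₓ (u²/2) = 0` on `Ω`. -/
def IsWeakBurgers (Ω : Set (ℝ × ℝ)) (u : ℝ × ℝ → ℝ) : Prop :=
  ∀ φ, IsTestFun Ω φ → ∫ z in Ω, (u z * pdt φ z + u z ^ 2 / 2 * pdx φ z) = 0

/-- The (finite) signed Radon measure `μ` on `Ω` is the quadratic entropy production
`μ = ∂ₜ(u²/2) + ∂ₓ(u³/3)` of `u`. -/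
def IsEntropyProduction (Ω : Set (ℝ × ℝ)) (u : ℝ × ℝ → ℝ)
    (μ : MeasureTheory.SignedMeasure (ℝ × ℝ)) : Prop :=
  μ.totalVariation Ωᶜ = 0 ∧
  ∀ φ, IsTestFun Ω φ →
    ∫ z in Ω, (u z ^ 2 / 2 * pdt φ z + u z ^ 3 / 3 * pdx φ z)
      = -((∫ z, φ z ∂μ.toJordanDecomposition.posPart)
          - ∫ z, φ z ∂μ.toJordanDecomposition.negPart)

/-- The square `Q_r(z) = (t-r,t+r) × (x-r,x+r)` for `z = (t,x)`. -/
def Qsq (z : ℝ × ℝ) (r : ℝ) : Set (ℝ × ℝ) :=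
  Ioo (z.1 - r) (z.1 + r) ×ˢ Ioo (z.2 - r) (z.2 + r)

/-- The set `Ω_{α,K}` of points where `|μ|(Q_r(z)) ≤ K r^{1+α}` for all
`r ∈ (0, min(d(z),1))`; here `d(z)` is the `ℓ^∞`-distance of `z` to `Ωᶜ`
(the product metric on `ℝ × ℝ` is the sup metric). -/
def OmegaAK (Ω : Set (ℝ × ℝ)) (μ : MeasureTheory.SignedMeasure (ℝ × ℝ)) (α K : ℝ) :
    Set (ℝ × ℝ) :=
  {z | z ∈ Ω ∧ ∀ r : ℝ, 0 < r → r < min (Metric.infDist z Ωᶜ) 1 →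
    μ.totalVariation (Qsq z r) ≤ ENNReal.ofReal (K * r ^ (1 + α))}

/-- The unit square `Q = (0,1) × (0,1)`. -/
def Qunit : Set (ℝ × ℝ) := Ioo (0:ℝ) 1 ×ˢ Ioo (0:ℝ) 1

/-- The parabolic boundary `∂₀Q = ({0} × (0,1)) ∪ ((0,1) × {0,1})`. -/
def parbQ : Set (ℝ × ℝ) :=
  ({(0:ℝ)} ×ˢ Ioo (0:ℝ) 1) ∪ (Ioo (0:ℝ) 1 ×ˢ ({0, 1} : Set ℝ))

/-- The Hopf–Lax function associated with the values of `h` on the parabolic boundary: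
`h̄(t,x) = inf { h(s,y) + (x-y)²/(2(t-s)) : (s,y) ∈ ∂₀Q, s < t }`. -/
def hopfLax (h : ℝ × ℝ → ℝ) (z : ℝ × ℝ) : ℝ :=
  sInf {v : ℝ | ∃ w ∈ parbQ, w.1 < z.1 ∧ v = h w + (z.2 - w.2) ^ 2 / (2 * (z.1 - w.1))}

lemma lip1d {g : ℝ → ℝ} {K : NNReal} (hg : LipschitzWith K g) {L : ℝ}
    (hd : ∀ᵐ y : ℝ, ∃ d : ℝ, HasDerivAt g d y ∧ |d| ≤ L) {u v : ℝ} (huv : u ≤ v) :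
    |g v - g u| ≤ L * (v - u) := by
  rcases eq_or_lt_of_le huv with rfl | hlt
  · simp
  classical
  set d : ℝ → ℝ := fun y => if hy : ∃ d : ℝ, HasDerivAt g d y ∧ |d| ≤ L then hy.choose else 0
    with hdd
  have hda : ∀ᵐ y : ℝ, HasDerivAt g (d y) y ∧ |d y| ≤ L := by
    filter_upwards [hd] with y hy
    simp only [hdd, dif_pos hy]
    exact hy.choose_spec
  have hcont : Continuous g := hg.continuous
  set e : ℕ → ℝ := fun n => ((n : ℝ) + 1)⁻¹ with he
  have he_pos : ∀ n : ℕ, 0 < e n := fun n => by positivity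
  have hone : ∀ n : ℕ, ((n : ℝ) + 1) * e n = 1 := fun n => by
    rw [he]; field_simp
  have he0 : Tendsto e atTop (𝓝 0) := by
    simpa [he, one_div] using tendsto_one_div_add_atTop_nhds_zero_nat (𝕜 := ℝ)
  set F : ℕ → ℝ → ℝ := fun n y => ((n : ℝ) + 1) * (g (y + e n) - g y) with hF
  -- pointwise convergence of slopes
  have hptw : ∀ᵐ y : ℝ, Tendsto (fun n => F n y) atTop (𝓝 (d y)) := by
    filter_upwards [hda] with y hy
    have h1 := hasDerivAt_iff_tendsto_slope.1 hy.1
    have hseq : Tendsto (fun n : ℕ => y + e n) atTop (𝓝[≠] y) := by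
      rw [tendsto_nhdsWithin_iff]
      constructor
      · simpa using tendsto_const_nhds.add he0
      · exact Eventually.of_forall fun n => by
          simp [ne_eq, (he_pos n).ne']
    have h2 := h1.comp hseq
    refine h2.congr fun n => ?_
    show slope g y (y + e n) = ((n : ℝ) + 1) * (g (y + e n) - g y)
    rw [slope_def_field, add_sub_cancel_left, div_eq_iff (he_pos n).ne']
    linear_combination (-(g (y + e n) - g y)) * hone n
  -- uniform bound on slopes
  have hbd : ∀ (n : ℕ) (y : ℝ), |F n y| ≤ (K : ℝ) := by
    intro n y
    have h1 : |g (y + e n) - g y| ≤ (K : ℝ) * e n := by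
      have := hg.dist_le_mul (y + e n) y
      simpa [Real.dist_eq, abs_of_pos (he_pos n)] using this
    have h2 : |F n y| = ((n : ℝ) + 1) * |g (y + e n) - g y| := by
      rw [hF, abs_mul, abs_of_pos]; positivity
    rw [h2]
    calc ((n : ℝ) + 1) * |g (y + e n) - g y| ≤ ((n : ℝ) + 1) * ((K : ℝ) * e n) :=
          mul_le_mul_of_nonneg_left h1 (by positivity)
      _ = (K : ℝ) := by linear_combination (K : ℝ) * hone n
  -- integral identity
  have hii : ∀ n : ℕ, (∫ y in u..v, F n y) =
      ((n : ℝ) + 1) * ((∫ y in v..(v + e n), g y) - ∫ y in u..(u + e n), g y) := by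
    intro n
    have hint : ∀ a b : ℝ, IntervalIntegrable g volume a b :=
      fun a b => hcont.intervalIntegrable a b
    have h5 : IntervalIntegrable (fun y => g (y + e n)) volume u v :=
      (hcont.comp (by continuity : Continuous fun y : ℝ => y + e n)).intervalIntegrable u v
    have h1 : (∫ y in u..v, g (y + e n)) = ∫ y in (u + e n)..(v + e n), g y :=
      intervalIntegral.integral_comp_add_right g (e n)
    have h2 : (∫ y in u..v, F n y)
        = ((n : ℝ) + 1) * ((∫ y in u..v, g (y + e n)) - ∫ y in u..v, g y) := by
      rw [← intervalIntegral.integral_sub h5 (hint u v),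
        ← intervalIntegral.integral_const_mul]
    have h3 : (∫ y in u..(u + e n), g y) + (∫ y in (u + e n)..(v + e n), g y)
        = ∫ y in u..(v + e n), g y := intervalIntegral.integral_add_adjacent_intervals
        (hint _ _) (hint _ _)
    have h4 : (∫ y in u..v, g y) + (∫ y in v..(v + e n), g y) = ∫ y in u..(v + e n), g y :=
      intervalIntegral.integral_add_adjacent_intervals (hint _ _) (hint _ _)
    rw [h2, h1]
    have h6 : (∫ y in (u + e n)..(v + e n), g y) - (∫ y in u..v, g y)
        = (∫ y in v..(v + e n), g y) - ∫ y in u..(u + e n), g y := by linarith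
    rw [h6]
  -- averages converge to endpoint values
  have havg : ∀ w : ℝ, Tendsto (fun n : ℕ => ((n : ℝ) + 1) * ∫ y in w..(w + e n), g y)
      atTop (𝓝 (g w)) := by
    intro w
    have key : ∀ n : ℕ, |((n : ℝ) + 1) * (∫ y in w..(w + e n), g y) - g w| ≤ (K : ℝ) * e n := by
      intro n
      have hgv : (∫ y in w..(w + e n), (g y - g w)) = (∫ y in w..(w + e n), g y) - e n * g w := by
        rw [intervalIntegral.integral_sub (hcont.intervalIntegrable _ _)
          intervalIntegrable_const, intervalIntegral.integral_const, smul_eq_mul]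
        ring_nf
      have hb : ‖∫ y in w..(w + e n), (g y - g w)‖ ≤ (K : ℝ) * e n * |w + e n - w| := by
        apply intervalIntegral.norm_integral_le_of_norm_le_const
        intro x hx
        rw [Set.uIoc_of_le (by linarith [he_pos n])] at hx
        have hx1 : |g x - g w| ≤ (K : ℝ) * |x - w| := by
          have := hg.dist_le_mul x w
          simpa [Real.dist_eq] using this
        refine le_trans hx1 ?_
        have hx2 : |x - w| ≤ e n := by
          rw [abs_of_pos (by linarith [hx.1])]
          linarith [hx.2]
        exact mul_le_mul_of_nonneg_left hx2 (by positivity)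
      rw [hgv] at hb
      have hsimp : |w + e n - w| = e n := by
        rw [show w + e n - w = e n from by ring, abs_of_pos (he_pos n)]
      rw [hsimp, Real.norm_eq_abs] at hb
      have h7 : ((n : ℝ) + 1) * (∫ y in w..(w + e n), g y) - g w
          = ((n : ℝ) + 1) * ((∫ y in w..(w + e n), g y) - e n * g w) := by
        linear_combination (g w) * hone n
      rw [h7, abs_mul, abs_of_pos (by positivity : (0:ℝ) < (n : ℝ) + 1)]
      calc ((n : ℝ) + 1) * |(∫ y in w..(w + e n), g y) - e n * g w|
          ≤ ((n : ℝ) + 1) * ((K : ℝ) * e n * e n) :=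
            mul_le_mul_of_nonneg_left hb (by positivity)
        _ = (K : ℝ) * e n := by linear_combination ((K : ℝ) * e n) * hone n
    have h0 : Tendsto (fun n : ℕ => ((n : ℝ) + 1) * (∫ y in w..(w + e n), g y) - g w)
        atTop (𝓝 0) := by
      apply squeeze_zero_norm (fun n => by simpa using key n)
      simpa using he0.const_mul (K : ℝ)
    have h8 := h0.add_const (g w)
    simpa using h8
  -- limit of the integrals
  have hlim1 : Tendsto (fun n : ℕ => ∫ y in u..v, F n y) atTop (𝓝 (g v - g u)) := by
    have h9 := (havg v).sub (havg u)
    refine h9.congr fun n => ?_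
    rw [hii n]; ring
  -- dominated convergence
  have hlim2 : Tendsto (fun n : ℕ => ∫ y in Ioc u v, F n y) atTop (𝓝 (∫ y in Ioc u v, d y)) := by
    apply MeasureTheory.tendsto_integral_of_dominated_convergence (fun _ => (K : ℝ))
    · intro n
      exact (continuous_const.mul ((hcont.comp
        (by continuity : Continuous fun y : ℝ => y + e n)).sub hcont)).aestronglyMeasurable
    · exact integrable_const _
    · intro n
      exact Eventually.of_forall fun y => by simpa [Real.norm_eq_abs] using hbd n y
    · exact ae_restrict_of_ae hptw
  have heq2 : ∀ n : ℕ, (∫ y in u..v, F n y) = ∫ y in Ioc u v, F n y := fun n =>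
    intervalIntegral.integral_of_le huv
  have hkey : g v - g u = ∫ y in Ioc u v, d y :=
    tendsto_nhds_unique (hlim1.congr fun n => heq2 n) hlim2
  have hfin : ‖∫ y in Ioc u v, d y‖ ≤ L * (volume (Ioc u v)).toReal := by
    apply MeasureTheory.norm_setIntegral_le_of_norm_le_const_ae' _
    · filter_upwards [hda] with y hy _
      simpa [Real.norm_eq_abs] using hy.2
    · rw [Real.volume_Ioc]; exact ENNReal.ofReal_lt_top
  rw [Real.norm_eq_abs, Real.volume_Ioc, ENNReal.toReal_ofReal (by linarith)] at hfin
  calc |g v - g u| = |∫ y in Ioc u v, d y| := by rw [hkey]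
    _ ≤ L * (v - u) := hfin

/-- Lipschitz estimate on `[0,1]` from an a.e. derivative bound on `(0,1)`. -/
lemma sect01 {F : ℝ → ℝ} {K : NNReal} (hF : LipschitzOnWith K F (Icc 0 1)) {M : ℝ}
    (hae : ∀ᵐ y : ℝ, y ∈ Ioo (0:ℝ) 1 → ∃ d : ℝ, HasDerivAt F d y ∧ |d| ≤ M)
    (hM : 0 ≤ M) {u v : ℝ} (hu : u ∈ Icc (0:ℝ) 1) (hv : v ∈ Icc (0:ℝ) 1) :
    |F v - F u| ≤ M * |v - u| := by
  set c : ℝ → ℝ := fun y => max (min y 1) 0 with hc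
  have hcmem : ∀ y, c y ∈ Icc (0:ℝ) 1 :=
    fun y => ⟨le_max_right _ _, max_le (min_le_right _ _) zero_le_one⟩
  have hcid : ∀ y ∈ Icc (0:ℝ) 1, c y = y := by
    intro y hy
    rw [hc]
    simp only [min_eq_left hy.2, max_eq_left hy.1]
  have hclip : ∀ a b : ℝ, |c a - c b| ≤ |a - b| := by
    intro a b
    refine le_trans (abs_max_sub_max_le_abs _ _ _) ?_
    refine le_trans (abs_min_sub_min_le_max _ _ _ _) ?_
    simp
  set G : ℝ → ℝ := fun y => F (c y) with hG
  have hGlip : LipschitzWith K G := by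
    apply LipschitzWith.of_dist_le_mul
    intro a b
    refine le_trans (hF.dist_le_mul _ (hcmem a) _ (hcmem b)) ?_
    have : dist (c a) (c b) ≤ dist a b := by
      rw [Real.dist_eq, Real.dist_eq]; exact hclip a b
    exact mul_le_mul_of_nonneg_left this K.2
  have hGd : ∀ᵐ y : ℝ, ∃ d : ℝ, HasDerivAt G d y ∧ |d| ≤ M := by
    have h0 : ∀ᵐ y : ℝ, y ≠ 0 := by
      have he : ({y : ℝ | ¬ y ≠ 0} : Set ℝ) = {0} := by ext; simp
      rw [ae_iff, he]; exact Real.volume_singleton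
    have h1 : ∀ᵐ y : ℝ, y ≠ 1 := by
      have he : ({y : ℝ | ¬ y ≠ 1} : Set ℝ) = {1} := by ext; simp
      rw [ae_iff, he]; exact Real.volume_singleton
    filter_upwards [hae, h0, h1] with y hy hy0 hy1
    rcases lt_trichotomy y 0 with hlt | rfl | hgt
    · refine ⟨0, ?_, by simpa using hM⟩
      have hev : G =ᶠ[𝓝 y] fun _ => F 0 := by
        filter_upwards [Iio_mem_nhds hlt] with z hz
        have hz' : z < 0 := mem_Iio.1 hz
        have : c z = 0 := by
          rw [hc]
          simp only [min_eq_left (by linarith : z ≤ 1), max_eq_right (le_of_lt hz')]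
        simp [hG, this]
      exact (hasDerivAt_const y (F 0)).congr_of_eventuallyEq hev
    · exact absurd rfl hy0
    rcases lt_trichotomy y 1 with hlt1 | rfl | hgt1
    · obtain ⟨d, hd1, hd2⟩ := hy ⟨hgt, hlt1⟩
      refine ⟨d, ?_, hd2⟩
      have hev : G =ᶠ[𝓝 y] F := by
        filter_upwards [Ioo_mem_nhds hgt hlt1] with z hz
        simp [hG, hcid z ⟨hz.1.le, hz.2.le⟩]
      exact hd1.congr_of_eventuallyEq hev
    · exact absurd rfl hy1
    · refine ⟨0, ?_, by simpa using hM⟩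
      have hev : G =ᶠ[𝓝 y] fun _ => F 1 := by
        filter_upwards [Ioi_mem_nhds hgt1] with z hz
        have hz' : (1:ℝ) < z := mem_Ioi.1 hz
        have : c z = 1 := by
          rw [hc]
          simp only [min_eq_right (le_of_lt hz'), max_eq_left zero_le_one]
        simp [hG, this]
      exact (hasDerivAt_const y (F 1)).congr_of_eventuallyEq hev
  rcases le_total u v with huv | huv
  · have := lip1d hGlip hGd huv
    rw [hG] at this
    simp only [hcid u hu, hcid v hv] at this
    calc |F v - F u| ≤ M * (v - u) := by simpa [hcid u hu, hcid v hv] using this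
      _ = M * |v - u| := by rw [abs_of_nonneg (by linarith)]
  · have := lip1d hGlip hGd huv
    rw [hG] at this
    rw [abs_sub_comm]
    calc |F u - F v| ≤ M * (u - v) := by simpa [hcid u hu, hcid v hv] using this
      _ = M * |v - u| := by rw [abs_sub_comm, abs_of_nonneg (by linarith)]

/-- A continuous function on `[0,1]` which is `≤ 0` a.e. on `(0,1)` is `≤ 0` on `[0,1]`. -/
lemma closed01 {f : ℝ → ℝ} (hf : ContinuousOn f (Icc 0 1))
    (hae : ∀ᵐ t : ℝ, t ∈ Ioo (0:ℝ) 1 → f t ≤ 0) : ∀ t ∈ Icc (0:ℝ) 1, f t ≤ 0 := by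
  intro t ht
  set B : Set ℝ := {s | s ∈ Ioo (0:ℝ) 1 ∧ f s ≤ 0} with hB
  have hBsub : B ⊆ Icc (0:ℝ) 1 := fun s hs => ⟨hs.1.1.le, hs.1.2.le⟩
  have hnull : volume (Ioo (0:ℝ) 1 \ B) = 0 := by
    have h1 : Ioo (0:ℝ) 1 \ B ⊆ {s | ¬ (s ∈ Ioo (0:ℝ) 1 → f s ≤ 0)} := by
      intro s hs
      simp only [mem_setOf_eq, Classical.not_imp]
      exact ⟨hs.1, fun hc => hs.2 ⟨hs.1, hc⟩⟩
    exact measure_mono_null h1 (ae_iff.1 hae)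
  have hcl : t ∈ closure B := by
    rw [mem_closure_iff]
    intro O hO htO
    obtain ⟨ε, hε, hball⟩ := Metric.isOpen_iff.1 hO t htO
    set a : ℝ := max 0 (t - ε/2) with ha
    set b : ℝ := min 1 (t + ε/2) with hb
    have hab : a < b := by
      rcases ht with ⟨ht0, ht1⟩
      rcases eq_or_lt_of_le ht0 with h0 | h0
      · have h2 : a = 0 := by rw [ha, ← h0]; simp; linarith
        rw [h2, hb]
        apply lt_min one_pos (by linarith)
      · have haa : a < t := by rw [ha]; apply max_lt h0; linarith
        have hbb : t ≤ b := by rw [hb]; exact le_min ht1 (by linarith)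
        linarith
    have hsub : Ioo a b ⊆ Ioo (0:ℝ) 1 ∩ Metric.ball t ε := by
      intro s hs
      constructor
      · exact ⟨lt_of_le_of_lt (le_max_left _ _) hs.1, lt_of_lt_of_le hs.2 (min_le_left _ _)⟩
      · rw [Metric.mem_ball, Real.dist_eq, abs_lt]
        have h1 : t - ε/2 ≤ a := le_max_right _ _
        have h2 : b ≤ t + ε/2 := min_le_right _ _
        constructor <;> [linarith [hs.1]; linarith [hs.2]]
    have hpos : 0 < volume (Ioo a b) := by rw [Real.volume_Ioo]; simp [hab]
    have hne : (Ioo a b ∩ B).Nonempty := by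
      by_contra hemp
      rw [not_nonempty_iff_eq_empty] at hemp
      have hsub2 : Ioo a b ⊆ Ioo (0:ℝ) 1 \ B := fun s hs =>
        ⟨(hsub hs).1, fun hsB => (eq_empty_iff_forall_notMem.1 hemp s ⟨hs, hsB⟩)⟩
      exact absurd (measure_mono_null hsub2 hnull) hpos.ne'
    obtain ⟨s, hs1, hs2⟩ := hne
    exact ⟨s, hball (hsub hs1).2, hs2⟩
  have hNe : (𝓝[B] t).NeBot := mem_closure_iff_nhdsWithin_neBot.1 hcl
  exact le_of_tendsto ((hf t ht).mono hBsub)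
    (eventually_nhdsWithin_of_forall fun s hs => hs.2)

/-- Derivation of the two directional Lipschitz bounds from the a.e. PDE info. -/
lemma derive_bounds (h : ℝ × ℝ → ℝ) (Kh : NNReal) (L : ℝ) (hL : 0 ≤ L)
    (hLip : LipschitzOnWith Kh h (Icc 0 1 ×ˢ Icc 0 1))
    (heq : ∀ᵐ z ∂(volume.restrict Qunit),
      DifferentiableAt ℝ h z ∧ pdt h z + (pdx h z) ^ 2 / 2 = 0)
    (hdx : ∀ᵐ z ∂(volume.restrict Qunit), |pdx h z| ≤ L) :
    (∀ t ∈ Icc (0:ℝ) 1, ∀ a ∈ Icc (0:ℝ) 1, ∀ b ∈ Icc (0:ℝ) 1,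
      |h (t,b) - h (t,a)| ≤ L * |b - a|)
    ∧ (∀ x ∈ Icc (0:ℝ) 1, ∀ a ∈ Icc (0:ℝ) 1, ∀ b ∈ Icc (0:ℝ) 1,
      |h (b,x) - h (a,x)| ≤ L^2/2 * |b - a|) := by
  set P : ℝ × ℝ → Prop := fun z =>
    DifferentiableAt ℝ h z ∧ pdt h z + (pdx h z) ^ 2 / 2 = 0 ∧ |pdx h z| ≤ L with hP
  have hae : ∀ᵐ z ∂(volume.restrict Qunit), P z := by
    filter_upwards [heq, hdx] with z h1 h2
    exact ⟨h1.1, h1.2, h2⟩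
  have hQm : MeasurableSet Qunit := measurableSet_Ioo.prod measurableSet_Ioo
  have h1 : volume ({z | ¬ P z} ∩ Qunit) = 0 := by
    rw [← Measure.restrict_apply' hQm]
    exact ae_iff.1 hae
  obtain ⟨N, hNsub, hNm, hN0⟩ := exists_measurable_superset_of_null h1
  have hprod : (volume.prod volume) N = 0 := by
    rw [← Measure.volume_eq_prod]; exact hN0
  have hT : ∀ᵐ t : ℝ, volume (Prod.mk t ⁻¹' N) = 0 := by
    filter_upwards [Measure.measure_ae_null_of_prod_null hprod] with t ht
    exact ht
  have hswap : (volume.prod volume) (Prod.swap ⁻¹' N) = 0 := by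
    rw [Measure.measurePreserving_swap.measure_preimage hNm.nullMeasurableSet]
    exact hprod
  have hX : ∀ᵐ x : ℝ, volume (Prod.mk x ⁻¹' (Prod.swap ⁻¹' N)) = 0 := by
    filter_upwards [Measure.measure_ae_null_of_prod_null hswap] with x hx
    exact hx
  have hcontH : ContinuousOn h (Icc 0 1 ×ˢ Icc 0 1) := hLip.continuousOn
  have hgoodP : ∀ z : ℝ × ℝ, z ∈ Qunit → z ∉ N → P z := by
    intro z hz hzN
    by_contra hc
    exact hzN (hNsub ⟨hc, hz⟩)
  constructor
  · -- x-direction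
    have HxAe : ∀ᵐ t : ℝ, t ∈ Ioo (0:ℝ) 1 → ∀ a ∈ Icc (0:ℝ) 1, ∀ b ∈ Icc (0:ℝ) 1,
        |h (t,b) - h (t,a)| ≤ L * |b - a| := by
      filter_upwards [hT] with t htN htI a ha b hb
      have hsec : LipschitzOnWith Kh (fun x => h (t,x)) (Icc 0 1) := by
        intro p hp q hq
        have := hLip (Set.mk_mem_prod (mem_Icc.2 ⟨htI.1.le, htI.2.le⟩) hp)
          (Set.mk_mem_prod (mem_Icc.2 ⟨htI.1.le, htI.2.le⟩) hq)
        simpa [Prod.edist_eq] using this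
      refine sect01 hsec ?_ hL ha hb
      have h2 : ∀ᵐ x : ℝ, (t,x) ∉ N := by
        rw [ae_iff]
        have : {x : ℝ | ¬ (t,x) ∉ N} = Prod.mk t ⁻¹' N := by ext x; simp
        rw [this]; exact htN
      filter_upwards [h2] with x hxN hxI
      have hPz : P (t,x) := hgoodP _ ⟨htI, hxI⟩ hxN
      refine ⟨pdx h (t,x), ?_, hPz.2.2⟩
      have hcurve : HasDerivAt (fun x : ℝ => ((t,x) : ℝ × ℝ)) ((0:ℝ),(1:ℝ)) x :=
        (hasDerivAt_const x t).prodMk (hasDerivAt_id x)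
      exact (hPz.1.hasFDerivAt).comp_hasDerivAt x hcurve
    intro t ht a ha b hb
    have hfc : ContinuousOn (fun s : ℝ => |h (s,b) - h (s,a)| - L * |b - a|) (Icc 0 1) := by
      apply ContinuousOn.sub _ continuousOn_const
      apply ContinuousOn.abs
      apply ContinuousOn.sub
      · exact hcontH.comp ((continuous_id.prodMk continuous_const).continuousOn)
          (fun s hs => Set.mk_mem_prod hs hb)
      · exact hcontH.comp ((continuous_id.prodMk continuous_const).continuousOn)
          (fun s hs => Set.mk_mem_prod hs ha)
    have := closed01 hfc (by
      filter_upwards [HxAe] with s hs hsI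
      have := hs hsI a ha b hb
      linarith) t ht
    linarith
  · -- t-direction
    have HtAe : ∀ᵐ x : ℝ, x ∈ Ioo (0:ℝ) 1 → ∀ a ∈ Icc (0:ℝ) 1, ∀ b ∈ Icc (0:ℝ) 1,
        |h (b,x) - h (a,x)| ≤ L^2/2 * |b - a| := by
      filter_upwards [hX] with x hxN hxI a ha b hb
      have hsec : LipschitzOnWith Kh (fun s => h (s,x)) (Icc 0 1) := by
        intro p hp q hq
        have := hLip (Set.mk_mem_prod hp (mem_Icc.2 ⟨hxI.1.le, hxI.2.le⟩))
          (Set.mk_mem_prod hq (mem_Icc.2 ⟨hxI.1.le, hxI.2.le⟩))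
        simpa [Prod.edist_eq] using this
      refine sect01 hsec ?_ (by positivity) ha hb
      have h2 : ∀ᵐ s : ℝ, (s,x) ∉ N := by
        rw [ae_iff]
        have : {s : ℝ | ¬ (s,x) ∉ N} = Prod.mk x ⁻¹' (Prod.swap ⁻¹' N) := by
          ext s; simp [Prod.swap]
        rw [this]; exact hxN
      filter_upwards [h2] with s hsN hsI
      have hPz : P (s,x) := hgoodP _ ⟨hsI, hxI⟩ hsN
      refine ⟨pdt h (s,x), ?_, ?_⟩
      · have hcurve : HasDerivAt (fun s : ℝ => ((s,x) : ℝ × ℝ)) ((1:ℝ),(0:ℝ)) s :=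
          (hasDerivAt_id s).prodMk (hasDerivAt_const s x)
        exact (hPz.1.hasFDerivAt).comp_hasDerivAt s hcurve
      · have h3 : pdt h (s,x) = -(pdx h (s,x))^2/2 := by
          have := hPz.2.1; linarith
        have h4 : (pdx h (s,x))^2 ≤ L^2 := by
          have := hPz.2.2
          nlinarith [abs_nonneg (pdx h (s,x)), le_abs_self (pdx h (s,x)),
            neg_abs_le (pdx h (s,x))]
        rw [h3, abs_of_nonpos (by nlinarith [sq_nonneg (pdx h (s,x))] : -(pdx h (s,x))^2/2 ≤ 0)]
        nlinarith [sq_nonneg (pdx h (s,x))]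
    intro x hx a ha b hb
    have hfc : ContinuousOn (fun y : ℝ => |h (b,y) - h (a,y)| - L^2/2 * |b - a|) (Icc 0 1) := by
      apply ContinuousOn.sub _ continuousOn_const
      apply ContinuousOn.abs
      apply ContinuousOn.sub
      · exact hcontH.comp ((continuous_const.prodMk continuous_id).continuousOn)
          (fun y hy => Set.mk_mem_prod hb hy)
      · exact hcontH.comp ((continuous_const.prodMk continuous_id).continuousOn)
          (fun y hy => Set.mk_mem_prod ha hy)
    have := closed01 hfc (by
      filter_upwards [HtAe] with y hy hyI
      have := hy hyI a ha b hb
      linarith) x hx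
    linarith

def HS (h : ℝ × ℝ → ℝ) (t x : ℝ) : Set ℝ :=
  {v : ℝ | ∃ w ∈ parbQ, w.1 < t ∧ v = h w + (x - w.2) ^ 2 / (2 * (t - w.1))}

lemma hopfLax_eq (h : ℝ × ℝ → ℝ) (t x : ℝ) : hopfLax h (t, x) = sInf (HS h t x) := rfl

lemma parb_mem {w : ℝ × ℝ} (hw : w ∈ parbQ) : w.1 ∈ Icc (0:ℝ) 1 ∧ w.2 ∈ Icc (0:ℝ) 1 := by
  rcases hw with ⟨h1, h2⟩ | ⟨h1, h2⟩
  · rw [mem_singleton_iff] at h1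
    exact ⟨by rw [h1]; exact ⟨le_refl _, zero_le_one⟩, ⟨h2.1.le, h2.2.le⟩⟩
  · refine ⟨⟨h1.1.le, h1.2.le⟩, ?_⟩
    rcases h2 with h2 | h2 <;> rw [mem_singleton_iff.1 h2] <;> constructor <;> norm_num

lemma parb_reflect {w : ℝ × ℝ} (hw : w ∈ parbQ) : ((w.1, 1 - w.2) : ℝ × ℝ) ∈ parbQ := by
  rcases hw with ⟨h1, h2⟩ | ⟨h1, h2⟩
  · exact Or.inl ⟨h1, ⟨show (0:ℝ) < 1 - w.2 by linarith [h2.2],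
      show (1 - w.2 : ℝ) < 1 by linarith [h2.1]⟩⟩
  · refine Or.inr ⟨h1, ?_⟩
    rcases h2 with h2 | h2 <;> rw [mem_singleton_iff.1 h2]
    · right; norm_num
    · left; norm_num

lemma hop_bdd (h : ℝ × ℝ → ℝ) (L : ℝ) (hL : 0 ≤ L)
    (Hx : ∀ t ∈ Icc (0:ℝ) 1, ∀ a ∈ Icc (0:ℝ) 1, ∀ b ∈ Icc (0:ℝ) 1,
      |h (t,b) - h (t,a)| ≤ L * |b - a|)
    (Ht : ∀ x ∈ Icc (0:ℝ) 1, ∀ a ∈ Icc (0:ℝ) 1, ∀ b ∈ Icc (0:ℝ) 1,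
      |h (b,x) - h (a,x)| ≤ L^2/2 * |b - a|)
    {t x : ℝ} (ht : t ∈ Ioo (0:ℝ) 1) : BddBelow (HS h t x) := by
  refine ⟨h (0,0) - (L^2/2 + L), ?_⟩
  rintro v ⟨⟨s,y⟩, hw, hst, rfl⟩
  obtain ⟨hsI, hyI⟩ := parb_mem hw
  have h1 : |h (s,y) - h (0,y)| ≤ L^2/2 * |s - 0| :=
    Ht y hyI 0 ⟨le_refl _, zero_le_one⟩ s hsI
  have h2 : |h (0,y) - h (0,0)| ≤ L * |y - 0| :=
    Hx 0 ⟨le_refl _, zero_le_one⟩ 0 ⟨le_refl _, zero_le_one⟩ y hyI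
  have h3 : |s - 0| ≤ 1 := by rw [sub_zero, abs_of_nonneg hsI.1]; exact hsI.2
  have h4 : |y - 0| ≤ 1 := by rw [sub_zero, abs_of_nonneg hyI.1]; exact hyI.2
  have h5 : L^2/2 * |s - 0| ≤ L^2/2 := by nlinarith [sq_nonneg L]
  have h6 : L * |y - 0| ≤ L := by nlinarith
  have h7 : (0:ℝ) ≤ (x - y)^2 / (2 * (t - s)) := by
    apply div_nonneg (sq_nonneg _); linarith
  have h8 := neg_abs_le (h (s,y) - h (0,y))
  have h9 := neg_abs_le (h (0,y) - h (0,0))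
  simp only [mem_setOf_eq]
  linarith

set_option maxHeartbeats 1000000 in
lemma hop_key (h : ℝ × ℝ → ℝ) (L : ℝ) (hL : 0 ≤ L)
    (Hx : ∀ t ∈ Icc (0:ℝ) 1, ∀ a ∈ Icc (0:ℝ) 1, ∀ b ∈ Icc (0:ℝ) 1,
      |h (t,b) - h (t,a)| ≤ L * |b - a|)
    (Ht : ∀ x ∈ Icc (0:ℝ) 1, ∀ a ∈ Icc (0:ℝ) 1, ∀ b ∈ Icc (0:ℝ) 1,
      |h (b,x) - h (a,x)| ≤ L^2/2 * |b - a|)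
    {t x x' : ℝ} (ht : t ∈ Ioo (0:ℝ) 1) (hx : x ∈ Ioo (0:ℝ) 1) (hx' : x' ∈ Ioo (0:ℝ) 1)
    (hxx : x ≤ x') :
    hopfLax h (t, x) ≤ hopfLax h (t, x') + L * (x' - x) := by
  have hbdd : BddBelow (HS h t x) := hop_bdd h L hL Hx Ht ht
  have hne' : (HS h t x').Nonempty :=
    ⟨h (0,x') + (x' - x')^2 / (2 * (t - 0)), (0,x'), Or.inl ⟨rfl, hx'⟩, ht.1, rfl⟩
  have key : ∀ v ∈ HS h t x', hopfLax h (t,x) ≤ v + L * (x' - x) := by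
    rintro v ⟨⟨s,y⟩, hw, hst, rfl⟩
    rcases hw with ⟨hs0, hyI⟩ | ⟨hsI, hy01⟩
    · -- initial boundary
      rw [mem_singleton_iff] at hs0
      subst hs0
      obtain ⟨y', hy'mem, hy'close, hy'sq⟩ :
          ∃ y', y' ∈ Ioo (0:ℝ) 1 ∧ |y' - y| ≤ x' - x ∧ (x - y')^2 ≤ (x' - y)^2 := by
        rcases le_or_gt (2*y - x - x') 0 with hA | hA
        · refine ⟨y, hyI, by simp; linarith, ?_⟩
          apply sq_le_sq'
          · linarith
          · linarith
        rcases le_or_gt (2*y - x - x') (x' - x) with hAd | hAd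
        · refine ⟨x + x' - y, ⟨by linarith [hx.1], by linarith [hyI.2]⟩, ?_, ?_⟩
          · rw [show x + x' - y - y = -(2*y - x - x') from by ring, abs_neg,
              abs_of_pos hA]
            linarith
          · have hxy : x - (x + x' - y) = -(x' - y) := by ring
            rw [hxy, neg_sq]
        · refine ⟨y - (x' - x), ⟨by linarith [hx.1], by linarith [hyI.2]⟩, ?_, ?_⟩
          · rw [show y - (x' - x) - y = -(x' - x) from by ring, abs_neg,
              abs_of_nonneg (by linarith)]
          · have hxy : x - (y - (x' - x)) = -(y - x') := by ring
            rw [hxy, neg_sq]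
            have hyy : (y - x')^2 = (x' - y)^2 := by ring
            rw [hyy]
      have hmem : h (0,y') + (x - y')^2 / (2 * (t - 0)) ∈ HS h t x :=
        ⟨(0,y'), Or.inl ⟨rfl, hy'mem⟩, ht.1, rfl⟩
      have h1 := csInf_le hbdd hmem
      rw [hopfLax_eq]
      have h2 : |h (0,y') - h (0,y)| ≤ L * |y' - y| :=
        Hx 0 ⟨le_refl _, zero_le_one⟩ y ⟨hyI.1.le, hyI.2.le⟩ y' ⟨hy'mem.1.le, hy'mem.2.le⟩
      have h3 : h (0,y') - h (0,y) ≤ L * (x' - x) := by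
        have h3a := (le_abs_self (h (0,y') - h (0,y))).trans h2
        have h3b : L * |y' - y| ≤ L * (x' - x) := mul_le_mul_of_nonneg_left hy'close hL
        linarith
      have h5 : (x - y')^2 / (2 * (t - 0)) ≤ (x' - y)^2 / (2 * (t - 0)) :=
        div_le_div_of_nonneg_right hy'sq (by linarith [ht.1])
      linarith
    · -- lateral boundary
      have hτ0 : 0 < t - s := by linarith
      rcases hy01 with hy | hy
      · have hy' : y = 0 := hy
        subst hy'
        have hmem : h (s,0) + (x - 0)^2 / (2 * (t - s)) ∈ HS h t x :=
          ⟨(s,0), Or.inr ⟨hsI, Or.inl rfl⟩, hst, rfl⟩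
        have h1 := csInf_le hbdd hmem
        rw [hopfLax_eq]
        have h5 : (x - 0)^2 / (2 * (t - s)) ≤ (x' - 0)^2 / (2 * (t - s)) := by
          apply div_le_div_of_nonneg_right _ (by linarith)
          nlinarith [hx.1]
        nlinarith [mul_nonneg hL (sub_nonneg.2 hxx)]
      · have hy' : y = 1 := mem_singleton_iff.1 hy
        subst hy'
        set τ := t - s with hτdef
        set a := 1 - x with hadef
        set b := 1 - x' with hbdef
        have hapos : 0 < a := by rw [hadef]; linarith [hx.2]
        have hbpos : 0 < b := by rw [hbdef]; linarith [hx'.2]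
        have hba : b ≤ a := by rw [hadef, hbdef]; linarith
        have hab2 : a - b = x' - x := by rw [hadef, hbdef]; ring
        have hAM : L * b ≤ b^2 / (2*τ) + L^2 * τ / 2 := by
          rw [← sub_nonneg]
          have hid : b^2 / (2*τ) + L^2 * τ / 2 - L * b = (b - L*τ)^2 / (2*τ) := by
            field_simp
            ring
          rw [hid]
          positivity
        have hb2 : ((x' - 1 : ℝ))^2 = b^2 := by rw [hbdef]; ring
        rcases le_or_gt a (L*τ) with hcase | hcase
        · -- near-wall candidate: reuse the same point
          have hmem : h (s,1) + (x - 1)^2 / (2 * (t - s)) ∈ HS h t x :=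
            ⟨(s,1), Or.inr ⟨hsI, Or.inr rfl⟩, hst, rfl⟩
          have h1 := csInf_le hbdd hmem
          rw [hopfLax_eq]
          have h5 : (x - 1)^2 / (2 * τ) ≤ (x' - 1)^2 / (2 * τ) + L * (x' - x) := by
            rw [div_add' _ _ _ (by linarith : (2 * τ) ≠ 0)]
            apply div_le_div_of_nonneg_right _ (by linarith)
            have e1 : ((x - 1 : ℝ))^2 = a^2 := by rw [hadef]; ring
            rw [e1, hb2]
            nlinarith [mul_le_mul_of_nonneg_right hcase (sub_nonneg.2 hxx)]
          linarith
        · rcases lt_or_ge a (L*t) with hcase2 | hcase2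
          · -- slide along the wall
            have hLpos : 0 < L := by
              rcases hL.lt_or_eq with h' | h'
              · exact h'
              · exfalso; rw [← h'] at hcase2; nlinarith [ht.1]
            set s' := t - a/L with hs'def
            have hs'0 : 0 < s' := by
              rw [hs'def, sub_pos, div_lt_iff₀ hLpos]; nlinarith
            have hs't : s' < t := by
              rw [hs'def]; have := div_pos hapos hLpos; linarith
            have hs'1 : s' < 1 := lt_trans hs't ht.2
            have hts' : t - s' = a/L := by rw [hs'def]; ring
            have hmem : h (s',1) + (x - 1)^2 / (2 * (t - s')) ∈ HS h t x :=
              ⟨(s',1), Or.inr ⟨⟨hs'0, hs'1⟩, Or.inr rfl⟩, hs't, rfl⟩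
            have h1 := csInf_le hbdd hmem
            rw [hopfLax_eq]
            have hval : (x - 1)^2 / (2 * (t - s')) = L * a / 2 := by
              rw [hts', show ((x - 1 : ℝ))^2 = a^2 from by rw [hadef]; ring]
              field_simp
            have h2 : |h (s',1) - h (s,1)| ≤ L^2/2 * |s' - s| :=
              Ht 1 ⟨zero_le_one, le_refl _⟩ s ⟨hsI.1.le, hsI.2.le⟩ s' ⟨hs'0.le, hs'1.le⟩
            have hτa : τ ≤ a/L := by
              rw [le_div_iff₀ hLpos]; nlinarith
            have h3 : |s' - s| = a/L - τ := by
              rw [hs'def, show t - a/L - s = -(a/L - τ) from by rw [hτdef]; ring, abs_neg,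
                abs_of_nonneg (by linarith)]
            have h4 : h (s',1) - h (s,1) ≤ L^2/2 * (a/L - τ) := by
              have := (le_abs_self (h (s',1) - h (s,1))).trans h2
              rw [h3] at this
              exact this
            have heq2 : L^2/2 * (a/L - τ) + L*a/2 = L*a - L^2*τ/2 := by
              field_simp
              ring
            rw [hb2]
            have hab3 : L*(a - b) = L*(x' - x) := by rw [hab2]
            linarith
          · -- epsilon argument near the corner
            rw [hopfLax_eq, show ((x' - 1 : ℝ))^2 = b^2 from hb2]
            apply le_of_forall_pos_le_add
            intro η hη
            set ε := min (x/2) (Real.sqrt (2*t*η)) with hεdef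
            have hε0 : 0 < ε :=
              lt_min (by linarith [hx.1]) (Real.sqrt_pos.2 (by nlinarith [ht.1]))
            have hεx : ε < x := lt_of_le_of_lt (min_le_left _ _) (by linarith [hx.1])
            have hε2 : ε^2 ≤ 2*t*η := by
              have e1 : ε ≤ Real.sqrt (2*t*η) := min_le_right _ _
              have e2 : ε^2 ≤ Real.sqrt (2*t*η)^2 := pow_le_pow_left₀ hε0.le e1 2
              rwa [Real.sq_sqrt (by nlinarith [ht.1])] at e2
            set yε := x + L*t - ε with hyεdef
            have hyε : yε ∈ Ioo (0:ℝ) 1 := by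
              constructor
              · rw [hyεdef]; nlinarith [mul_nonneg hL ht.1.le]
              · rw [hyεdef]; linarith
            have hmem : h (0,yε) + (x - yε)^2 / (2 * (t - 0)) ∈ HS h t x :=
              ⟨(0,yε), Or.inl ⟨rfl, hyε⟩, ht.1, rfl⟩
            have h1 := csInf_le hbdd hmem
            have hq : (x - yε)^2 / (2 * (t - 0)) = L^2*t/2 - L*ε + ε^2/(2*t) := by
              rw [hyεdef, show x - (x + L*t - ε) = ε - L*t from by ring, sub_zero]
              field_simp [ne_of_gt ht.1]
              ring
            have h2 : |h (0,yε) - h (0,1)| ≤ L * |yε - 1| :=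
              Hx 0 ⟨le_refl _, zero_le_one⟩ 1 ⟨zero_le_one, le_refl _⟩ yε
                ⟨hyε.1.le, hyε.2.le⟩
            have h3 : |yε - 1| = a - L*t + ε := by
              rw [abs_of_nonpos (by linarith [hyε.2]), hyεdef, hadef]
              ring
            have h4 : |h (0,1) - h (s,1)| ≤ L^2/2 * |0 - s| :=
              Ht 1 ⟨zero_le_one, le_refl _⟩ s ⟨hsI.1.le, hsI.2.le⟩ 0 ⟨le_refl _, zero_le_one⟩
            have h5 : |(0:ℝ) - s| = s := by
              rw [show (0:ℝ) - s = -s from by ring, abs_neg, abs_of_nonneg hsI.1.le]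
            have h6 : h (0,yε) - h (0,1) ≤ L * (a - L*t + ε) := by
              have := (le_abs_self _).trans h2
              rw [h3] at this
              exact this
            have h7 : h (0,1) - h (s,1) ≤ L^2/2 * s := by
              have := (le_abs_self _).trans h4
              rw [h5] at this
              exact this
            have heps : ε^2/(2*t) ≤ η := by
              rw [div_le_iff₀ (by linarith [ht.1] : (0:ℝ) < 2*t)]
              linarith
            have hid2 : L^2/2 * s + L*(a - L*t) + L^2*t/2 = L*a - L^2*τ/2 := by
              rw [hτdef]; ring
            have hab3 : L*(a - b) = L*(x' - x) := by rw [hab2]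
            clear_value τ a b ε yε
            have c0 : sInf (HS h t x) ≤ h (0,yε) + (L^2*t/2 - L*ε + ε^2/(2*t)) := by
              linarith [h1, hq]
            have c0b : h (0,yε) ≤ h (s,1) + L^2/2*s + L*(a - L*t + ε) := by
              linarith [h6, h7]
            have c1 : sInf (HS h t x) ≤ h (s,1) + (L*a - L^2*τ/2) + ε^2/(2*t) := by
              linarith [c0, c0b, hid2]
            have c2 : L*a - L^2*τ/2 ≤ b^2/(2*τ) + L*(x' - x) := by linarith
            linarith
  have hstep : hopfLax h (t,x) - L * (x' - x) ≤ sInf (HS h t x') :=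
    le_csInf hne' (fun v hv => by linarith [key v hv])
  rw [hopfLax_eq (h := h) (t := t) (x := x')]
  linarith

lemma hopf_reflect (h : ℝ × ℝ → ℝ) (t x : ℝ) :
    hopfLax (fun z => h (z.1, 1 - z.2)) (t, 1 - x) = hopfLax h (t, x) := by
  rw [hopfLax_eq, hopfLax_eq]
  congr 1
  ext v
  simp only [HS, mem_setOf_eq]
  constructor
  · rintro ⟨⟨s,y⟩, hw, hst, rfl⟩
    refine ⟨(s, 1 - y), parb_reflect hw, hst, ?_⟩
    show h (s, 1 - y) + ((1 - x) - y)^2 / (2*(t - s))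
      = h (s, 1 - y) + (x - (1 - y))^2 / (2*(t - s))
    rw [show ((1 - x) - y)^2 = (x - (1 - y))^2 from by ring]
  · rintro ⟨⟨s,y⟩, hw, hst, rfl⟩
    refine ⟨(s, 1 - y), parb_reflect hw, hst, ?_⟩
    show h (s, y) + (x - y)^2 / (2*(t - s))
      = h (s, 1 - (1 - y)) + ((1 - x) - (1 - y))^2 / (2*(t - s))
    rw [show (1:ℝ) - (1 - y) = y from by ring,
      show ((1 - x) - (1 - y))^2 = (x - y)^2 from by ring]

lemma hop_both (h : ℝ × ℝ → ℝ) (L : ℝ) (hL : 0 ≤ L)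
    (Hx : ∀ t ∈ Icc (0:ℝ) 1, ∀ a ∈ Icc (0:ℝ) 1, ∀ b ∈ Icc (0:ℝ) 1,
      |h (t,b) - h (t,a)| ≤ L * |b - a|)
    (Ht : ∀ x ∈ Icc (0:ℝ) 1, ∀ a ∈ Icc (0:ℝ) 1, ∀ b ∈ Icc (0:ℝ) 1,
      |h (b,x) - h (a,x)| ≤ L^2/2 * |b - a|)
    {t x x' : ℝ} (ht : t ∈ Ioo (0:ℝ) 1) (hx : x ∈ Ioo (0:ℝ) 1) (hx' : x' ∈ Ioo (0:ℝ) 1)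
    (hxx : x ≤ x') :
    |hopfLax h (t, x) - hopfLax h (t, x')| ≤ L * (x' - x) := by
  have h1 := hop_key h L hL Hx Ht ht hx hx' hxx
  have Hxg : ∀ τ ∈ Icc (0:ℝ) 1, ∀ a ∈ Icc (0:ℝ) 1, ∀ b ∈ Icc (0:ℝ) 1,
      |(fun z : ℝ × ℝ => h (z.1, 1 - z.2)) (τ,b) - (fun z : ℝ × ℝ => h (z.1, 1 - z.2)) (τ,a)|
        ≤ L * |b - a| := by
    intro τ hτ a ha b hb
    have hma : (1:ℝ) - a ∈ Icc (0:ℝ) 1 := ⟨by linarith [ha.2], by linarith [ha.1]⟩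
    have hmb : (1:ℝ) - b ∈ Icc (0:ℝ) 1 := ⟨by linarith [hb.2], by linarith [hb.1]⟩
    calc |h (τ, 1 - b) - h (τ, 1 - a)| ≤ L * |(1 - b) - (1 - a)| := Hx τ hτ (1-a) hma (1-b) hmb
      _ = L * |b - a| := by rw [show (1 - b) - (1 - a) = -(b - a) from by ring, abs_neg]
  have Htg : ∀ ξ ∈ Icc (0:ℝ) 1, ∀ a ∈ Icc (0:ℝ) 1, ∀ b ∈ Icc (0:ℝ) 1,
      |(fun z : ℝ × ℝ => h (z.1, 1 - z.2)) (b,ξ) - (fun z : ℝ × ℝ => h (z.1, 1 - z.2)) (a,ξ)|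
        ≤ L^2/2 * |b - a| := by
    intro ξ hξ a ha b hb
    have hmξ : (1:ℝ) - ξ ∈ Icc (0:ℝ) 1 := ⟨by linarith [hξ.2], by linarith [hξ.1]⟩
    exact Ht (1-ξ) hmξ a ha b hb
  have hmx : (1:ℝ) - x ∈ Ioo (0:ℝ) 1 := ⟨by linarith [hx.2], by linarith [hx.1]⟩
  have hmx' : (1:ℝ) - x' ∈ Ioo (0:ℝ) 1 := ⟨by linarith [hx'.2], by linarith [hx'.1]⟩
  have h2 := hop_key (fun z : ℝ × ℝ => h (z.1, 1 - z.2)) L hL Hxg Htg ht hmx' hmx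
    (by linarith)
  rw [hopf_reflect, hopf_reflect] at h2
  have h2' : hopfLax h (t,x') ≤ hopfLax h (t,x) + L * (x' - x) := by
    have : (1:ℝ) - x - (1 - x') = x' - x := by ring
    rw [this] at h2
    exact h2
  rw [abs_le]
  constructor <;> linarith

/-- **Lipschitz bound in `x` for the Hopf–Lax solution**: if `h` is Lipschitz, solves the
Hamilton–Jacobi equation a.e. in `Q` and `L = ‖∂ₓ h‖_{L^∞(Q)}`, then `x ↦ h̄(t,x)` is
`L`-Lipschitz for every `t ∈ (0,1)`. -/
theorem stmt16 (h : ℝ × ℝ → ℝ) (Kh : NNReal) (L : ℝ) (hL : 0 ≤ L)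
    (hLip : LipschitzOnWith Kh h (Icc 0 1 ×ˢ Icc 0 1))
    (heq : ∀ᵐ z ∂(volume.restrict Qunit),
      DifferentiableAt ℝ h z ∧ pdt h z + (pdx h z) ^ 2 / 2 = 0)
    (hdx : ∀ᵐ z ∂(volume.restrict Qunit), |pdx h z| ≤ L) :
    ∀ t ∈ Ioo (0:ℝ) 1, ∀ x ∈ Ioo (0:ℝ) 1, ∀ x' ∈ Ioo (0:ℝ) 1,
      |hopfLax h (t, x) - hopfLax h (t, x')| ≤ L * |x - x'| := by
  obtain ⟨Hx, Ht⟩ := derive_bounds h Kh L hL hLip heq hdx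
  intro t ht x hx x' hx'
  rcases le_total x x' with hxx | hxx
  · have hb := hop_both h L hL Hx Ht ht hx hx' hxx
    rwa [show |x - x'| = x' - x from by rw [abs_of_nonpos (by linarith)]; ring]
  · have hb := hop_both h L hL Hx Ht ht hx' hx hxx
    rw [abs_sub_comm] at hb
    rwa [show |x - x'| = x - x' from abs_of_nonneg (by linarith)]
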